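/- If t ∈ (0,1) and p = t·p_l + (1−t)·p_r for probability vectors p_l, p_r, then the Gini impurity decrease G(p) − t·G(p_l) − (1−t)·G(p_r) equals t(1−t)·Σ_i (p_l_i − p_r_i)², and hence is zero if and only if p_l = p_r. -/
import Mathlib


theorem gini_decrease_formula (K : ℕ) (p pl pr : Fin K → ℝ) (t : ℝ)
    (ht : 0 < t ∧ t < 1)
    (hpl : (∀ i, 0 ≤ pl i) ∧ ∑ i, pl i = 1)
    (hpr : (∀ i, 0 ≤ pr i) ∧ ∑ i, pr i = 1)
    (hp : ∀ i, p i = t * pl i + (1 - t) * pr i) :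
    (1 - ∑ i, (p i) ^ 2) - t * (1 - ∑ i, (pl i) ^ 2) - (1 - t) * (1 - ∑ i, (pr i) ^ 2)
      = t * (1 - t) * ∑ i, (pl i - pr i) ^ 2 ∧
    ((1 - ∑ i, (p i) ^ 2) - t * (1 - ∑ i, (pl i) ^ 2) - (1 - t) * (1 - ∑ i, (pr i) ^ 2) = 0
      ↔ pl = pr) := by
  have hform : (1 - ∑ i, (p i) ^ 2) - t * (1 - ∑ i, (pl i) ^ 2) - (1 - t) * (1 - ∑ i, (pr i) ^ 2)
      = t * (1 - t) * ∑ i, (pl i - pr i) ^ 2 := by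
    have h1 : ∑ i, (p i) ^ 2 = ∑ i, (t * pl i + (1 - t) * pr i) ^ 2 := by
      apply Finset.sum_congr rfl; intro i _; rw [hp i]
    have h2 : ∑ i, (t * pl i + (1 - t) * pr i) ^ 2 + t * (1 - t) * ∑ i, (pl i - pr i) ^ 2
        = t * ∑ i, (pl i) ^ 2 + (1 - t) * ∑ i, (pr i) ^ 2 := by
      rw [Finset.mul_sum, Finset.mul_sum, Finset.mul_sum, ← Finset.sum_add_distrib,
        ← Finset.sum_add_distrib]
      apply Finset.sum_congr rfl; intro i _; ring
    rw [h1]; linarith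
  refine ⟨hform, ?_⟩
  rw [hform]
  constructor
  · intro h
    obtain ⟨ht0, ht1⟩ := ht
    have htt : t * (1 - t) ≠ 0 := ne_of_gt (mul_pos ht0 (by linarith))
    have hsum : ∑ i, (pl i - pr i) ^ 2 = 0 := by
      rcases mul_eq_zero.mp h with h' | h'
      · exact absurd h' htt
      · exact h'
    funext i
    have := (Finset.sum_eq_zero_iff_of_nonneg (fun i _ => sq_nonneg (pl i - pr i))).mp hsum i
      (Finset.mem_univ i)
    have := sq_eq_zero_iff.mp this
    linarith
  · intro h
    rw [h]
    simp
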